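/- Inserting a new order's pickup node immediately followed by its delivery node at any position of a route that satisfies the LIFO condition yields a route that again satisfies the LIFO condition. -/

import Mathlib

/-- The LIFO (non-crossing) condition for a route given as a list of events
`(order, isPickup)`. -/
def LIFOCond {β : Type*} [DecidableEq β] (r : List (β × Bool)) : Prop :=
  ∀ i j : β, r.idxOf (i, true) < r.idxOf (j, true) →
    r.idxOf (i, false) ≤ r.idxOf (j, true) ∨
    r.idxOf (j, false) ≤ r.idxOf (i, false)

lemma aux_indexOf_append_right {γ : Type*} [BEq γ] [LawfulBEq γ]
    (l1 l2 : List γ) (x : γ) (h : x ∉ l1) :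
    (l1 ++ l2).idxOf x = l1.length + l2.idxOf x := by
  induction l1 with
  | nil => simp
  | cons a t ih =>
    have ha : (a == x) = false := by
      simp only [beq_eq_false_iff_ne]
      rintro rfl
      exact h List.mem_cons_self
    simp only [List.cons_append, List.idxOf_cons, ha, cond_false, List.length_cons]
    rw [ih (fun hm => h (List.mem_cons_of_mem _ hm))]
    omega

lemma aux_indexOf_map {α : Type*} [BEq (α × Bool)] [LawfulBEq (α × Bool)]
    [BEq (Option α × Bool)] [LawfulBEq (Option α × Bool)]
    (l : List (α × Bool)) (o : α) (b : Bool) :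
    (l.map (fun e => ((some e.1 : Option α), e.2))).idxOf (some o, b) = l.idxOf (o, b) := by
  induction l with
  | nil => rfl
  | cons a t ih =>
    rcases a with ⟨a1, a2⟩
    simp only [List.map_cons, List.idxOf_cons]
    have key : ((((some a1 : Option α), a2) : Option α × Bool) == (some o, b)) =
        (((a1, a2) : α × Bool) == (o, b)) := by
      by_cases h : ((a1, a2) : α × Bool) = (o, b)
      · obtain ⟨h1, h2⟩ := Prod.mk.injEq .. ▸ h
        subst h1; subst h2; simp
      · have h2 : (((some a1 : Option α), a2) : Option α × Bool) ≠ (some o, b) := by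
          simp_all [Prod.ext_iff]
        rw [beq_eq_false_iff_ne.mpr h, beq_eq_false_iff_ne.mpr h2]
    rw [key, ih]

lemma aux_splice_indexOf {γ : Type*} [BEq γ] [LawfulBEq γ] (M : List γ) (x : γ) (hx : x ∉ M) :
    ∀ (L : List γ) (p : ℕ), p ≤ L.length →
    (L.take p ++ M ++ L.drop p).idxOf x =
      if L.idxOf x < p then L.idxOf x else L.idxOf x + M.length := by
  intro L
  induction L with
  | nil =>
    intro p hp
    obtain rfl := Nat.le_zero.mp hp
    have h0 : (M ++ ([] : List γ)).idxOf x = M.length + ([] : List γ).idxOf x :=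
      aux_indexOf_append_right M [] x hx
    simp only [List.append_nil, List.idxOf_nil, Nat.add_zero] at h0
    simp [h0]
  | cons a t ih =>
    intro p hp
    cases p with
    | zero =>
      simp only [List.take_zero, List.drop_zero, List.nil_append]
      rw [aux_indexOf_append_right M _ x hx]
      rw [if_neg (by omega)]
      omega
    | succ q =>
      simp only [List.take_succ_cons, List.drop_succ_cons, List.cons_append,
        List.idxOf_cons]
      by_cases h : a = x
      · subst h
        simp
      · have hb : (a == x) = false := beq_eq_false_iff_ne.mpr h
        simp only [hb, cond_false]
        rw [ih q (by simpa using hp)]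
        split_ifs <;> omega

theorem stmt_5_general {α : Type*}
    [BEq (α × Bool)] [LawfulBEq (α × Bool)]
    [BEq (Option α × Bool)] [LawfulBEq (Option α × Bool)]
    (route : List (α × Bool))
    (h_lifo : ∀ i j : α, route.idxOf (i, true) < route.idxOf (j, true) →
      route.idxOf (i, false) ≤ route.idxOf (j, true) ∨
      route.idxOf (j, false) ≤ route.idxOf (i, false))
    (p : ℕ) (hp : p ≤ route.length) :
    ∀ i j : Option α,
      ((route.map (fun e => ((some e.1 : Option α), e.2))).take p ++
        [((none : Option α), true), ((none : Option α), false)] ++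
        (route.map (fun e => ((some e.1 : Option α), e.2))).drop p).idxOf (i, true) <
      ((route.map (fun e => ((some e.1 : Option α), e.2))).take p ++
        [((none : Option α), true), ((none : Option α), false)] ++
        (route.map (fun e => ((some e.1 : Option α), e.2))).drop p).idxOf (j, true) →
      ((route.map (fun e => ((some e.1 : Option α), e.2))).take p ++
        [((none : Option α), true), ((none : Option α), false)] ++
        (route.map (fun e => ((some e.1 : Option α), e.2))).drop p).idxOf (i, false) ≤
      ((route.map (fun e => ((some e.1 : Option α), e.2))).take p ++
        [((none : Option α), true), ((none : Option α), false)] ++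
        (route.map (fun e => ((some e.1 : Option α), e.2))).drop p).idxOf (j, true) ∨
      ((route.map (fun e => ((some e.1 : Option α), e.2))).take p ++
        [((none : Option α), true), ((none : Option α), false)] ++
        (route.map (fun e => ((some e.1 : Option α), e.2))).drop p).idxOf (j, false) ≤
      ((route.map (fun e => ((some e.1 : Option α), e.2))).take p ++
        [((none : Option α), true), ((none : Option α), false)] ++
        (route.map (fun e => ((some e.1 : Option α), e.2))).drop p).idxOf (i, false) := by
  set L := route.map (fun e => ((some e.1 : Option α), e.2)) with hL
  set M : List (Option α × Bool) := [(none, true), (none, false)] with hM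
  have hLlen : L.length = route.length := by simp [hL]
  have hMnone : ∀ b : Bool, ((none : Option α), b) ∉ L := by
    intro b hb
    simp [hL] at hb
  have hsome : ∀ (o : α) (b : Bool),
      (L.take p ++ M ++ L.drop p).idxOf (some o, b) =
        if route.idxOf (o, b) < p then route.idxOf (o, b)
        else route.idxOf (o, b) + 2 := by
    intro o b
    have hxM : ((some o : Option α), b) ∉ M := by simp [hM]
    rw [aux_splice_indexOf M _ hxM L p (by omega), aux_indexOf_map]
    simp [hM]
  have hnone : ∀ b : Bool,
      (L.take p ++ M ++ L.drop p).idxOf ((none : Option α), b) =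
        if b then p else p + 1 := by
    intro b
    have h1 : ((none : Option α), b) ∉ L.take p := fun h => hMnone b (List.mem_of_mem_take h)
    rw [List.append_assoc, aux_indexOf_append_right _ _ _ h1]
    have hlen : (L.take p).length = p := by rw [List.length_take]; omega
    rw [hlen]
    have e1 : ((((none : Option α), true) : Option α × Bool) == ((none : Option α), false)) = false :=
      beq_eq_false_iff_ne.mpr (by simp)
    have e2 : ((((none : Option α), true) : Option α × Bool) == ((none : Option α), true)) = true :=
      beq_self_eq_true _
    have e3 : ((((none : Option α), false) : Option α × Bool) == ((none : Option α), false)) = true :=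
      beq_self_eq_true _
    cases b <;> simp [hM, List.idxOf_cons, e1, e2, e3]
  intro i j hij
  match i, j with
  | none, none => exact absurd hij (lt_irrefl _)
  | none, some b =>
    left
    simp only [hnone, hsome, if_true] at hij ⊢
    split_ifs at hij ⊢ <;> omega
  | some a, none =>
    simp only [hnone, hsome, if_true] at hij ⊢
    split_ifs at hij ⊢ <;> omega
  | some a, some b =>
    simp only [hsome] at hij
    have hab : route.idxOf (a, true) < route.idxOf (b, true) := by
      split_ifs at hij <;> omega
    rcases h_lifo a b hab with h | h
    · left; simp only [hsome]; split_ifs <;> omega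
    · right; simp only [hsome]; split_ifs <;> omega

/-- Inserting a new order's pickup node immediately followed by its
delivery node at any position `p` of a route satisfying the LIFO condition yields a
route that again satisfies the LIFO condition.  The new order is represented by `none`
in `Option α`, the old orders by `some o`. -/
theorem stmt_5 {α : Type*} [DecidableEq α] (route : List (α × Bool))
    (h_pick : ∀ o : α, route.count (o, true) = 1)
    (h_del : ∀ o : α, route.count (o, false) = 1)
    (h_ord : ∀ o : α, route.idxOf (o, true) < route.idxOf (o, false))
    (h_lifo : LIFOCond route)
    (p : ℕ) (hp : p ≤ route.length) :
    LIFOCond ((route.map (fun e => ((some e.1 : Option α), e.2))).take p ++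
        [((none : Option α), true), ((none : Option α), false)] ++
        (route.map (fun e => ((some e.1 : Option α), e.2))).drop p) := by
  intro i j hij
  exact @stmt_5_general α
    (@instBEqProd α Bool instBEqOfDecidableEq instBEqOfDecidableEq) inferInstance
    (@instBEqProd (Option α) Bool instBEqOfDecidableEq instBEqOfDecidableEq) inferInstance
    route h_lifo p hp i j hij
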